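/- Let ℓ be a prime number, let n and m be natural numbers, and let F be a finite abelian ℓ-group. Let A be a finite subquotient of (ℚ_ℓ/ℤ_ℓ)^n ⊕ F (that is, A is a quotient group of a subgroup of (ℚ_ℓ/ℤ_ℓ)^n ⊕ F). If every element of A is annihilated by ℓ^m, then the order of A divides ℓ^{m·n} multiplied by the order of F[ℓ^m]. -/

import Mathlib

open QuotientAddGroup

abbrev DQ (ℓ : ℕ) [Fact ℓ.Prime] : Type := ℚ_[ℓ] ⧸ (PadicInt.subring ℓ).toAddSubgroup

section
variable (ℓ : ℕ) [Fact ℓ.Prime]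

lemma DQ.nsmul_mk (k : ℕ) (x : ℚ_[ℓ]) : (k • (mk x : DQ ℓ)) = mk (k • x) :=
  (map_nsmul (mk' ((PadicInt.subring ℓ).toAddSubgroup)) k x).symm

lemma DQ.nsmul_coe (x : ℚ_[ℓ]) (k : ℕ) : (k • x : ℚ_[ℓ]) = (k : ℚ_[ℓ]) * x := by
  rw [nsmul_eq_mul]

-- torsion
lemma DQ.torsion (d : DQ ℓ) : ∃ k : ℕ, ℓ ^ k • d = 0 := by
  obtain ⟨x, rfl⟩ := mk_surjective d
  obtain ⟨k, hk⟩ := pow_unbounded_of_one_lt (R := ℝ) ‖x‖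
    (Nat.one_lt_cast.mpr (Fact.out : ℓ.Prime).one_lt)
  refine ⟨k, ?_⟩
  rw [DQ.nsmul_mk, QuotientAddGroup.eq_zero_iff]
  show ℓ ^ k • x ∈ PadicInt.subring ℓ
  rw [PadicInt.mem_subring_iff, DQ.nsmul_coe, norm_mul]
  have : ‖((ℓ^k : ℕ) : ℚ_[ℓ])‖ = ((ℓ:ℝ)⁻¹)^k := by
    push_cast
    rw [norm_pow, Padic.norm_p]
  rw [this]
  calc ((ℓ:ℝ)⁻¹) ^ k * ‖x‖ ≤ ((ℓ:ℝ)⁻¹)^k * (ℓ:ℝ)^k := by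
        apply mul_le_mul_of_nonneg_left hk.le (by positivity)
    _ = 1 := by
        rw [← mul_pow, inv_mul_cancel₀ (by exact_mod_cast (Fact.out : ℓ.Prime).ne_zero), one_pow]

end

section
variable (ℓ : ℕ) [Fact ℓ.Prime]

/-- the `N`-torsion subgroup as kernel of the smul endomorphism -/
def torSub (G : Type*) [AddCommGroup G] (N : ℕ) : AddSubgroup G :=
  (DistribMulAction.toAddMonoidHom G N).ker

lemma mem_torSub {G : Type*} [AddCommGroup G] {N : ℕ} {x : G} :
    x ∈ torSub G N ↔ N • x = 0 := Iff.rfl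

noncomputable def DQ.hom (e : ℕ) : ZMod (ℓ^e) →+ DQ ℓ :=
  ZMod.lift (ℓ^e) ⟨(zmultiplesHom (DQ ℓ)) (mk (((ℓ:ℚ_[ℓ])^e)⁻¹)), by
    show ((ℓ^e : ℕ) : ℤ) • (mk (((ℓ:ℚ_[ℓ])^e)⁻¹) : DQ ℓ) = 0
    rw [natCast_zsmul, DQ.nsmul_mk, QuotientAddGroup.eq_zero_iff, DQ.nsmul_coe]
    show _ ∈ PadicInt.subring ℓ
    rw [PadicInt.mem_subring_iff]
    push_cast
    rw [mul_inv_cancel₀ (by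
      apply pow_ne_zero
      exact_mod_cast (Nat.cast_ne_zero (R := ℚ_[ℓ])).mpr (Fact.out : ℓ.Prime).ne_zero)]
    simp⟩

lemma DQ.hom_tor (e : ℕ) (z : ZMod (ℓ^e)) : ℓ^e • DQ.hom ℓ e z = 0 := by
  have : (ℓ^e : ℕ) • z = 0 := by
    rw [nsmul_eq_mul, ZMod.natCast_self, zero_mul]
  rw [← map_nsmul, this, map_zero]

lemma DQ.hom_surj (e : ℕ) {d : DQ ℓ} (hd : ℓ^e • d = 0) : ∃ z, DQ.hom ℓ e z = d := by
  obtain ⟨x, rfl⟩ := mk_surjective d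
  rw [DQ.nsmul_mk, QuotientAddGroup.eq_zero_iff] at hd
  have hd' : ‖(ℓ:ℚ_[ℓ])^e * x‖ ≤ 1 := by
    have := (PadicInt.mem_subring_iff ℓ).mp hd
    rwa [DQ.nsmul_coe, Nat.cast_pow] at this
  obtain ⟨c, hc⟩ := Ideal.mem_span_singleton'.mp
    (PadicInt.appr_spec e (⟨(ℓ:ℚ_[ℓ])^e * x, hd'⟩ : ℤ_[ℓ]))
  set a : ℕ := PadicInt.appr (⟨(ℓ:ℚ_[ℓ])^e * x, hd'⟩ : ℤ_[ℓ]) e with ha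
  clear_value a
  refine ⟨((a : ℤ) : ZMod (ℓ^e)), ?_⟩
  rw [DQ.hom, ZMod.lift_coe]
  show ((a : ℤ)) • (mk' ((PadicInt.subring ℓ).toAddSubgroup) (((ℓ:ℚ_[ℓ])^e)⁻¹)) = mk' _ x
  rw [← map_zsmul (mk' ((PadicInt.subring ℓ).toAddSubgroup))]
  show (mk _ : DQ ℓ) = mk x
  have hℓ : ((ℓ:ℚ_[ℓ])^e) ≠ 0 := by
    apply pow_ne_zero
    exact_mod_cast (Nat.cast_ne_zero (R := ℚ_[ℓ])).mpr (Fact.out : ℓ.Prime).ne_zero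
  have hcQ : (c:ℚ_[ℓ]) * (ℓ:ℚ_[ℓ])^e = (ℓ:ℚ_[ℓ])^e * x - (a : ℚ_[ℓ]) := by
    have h := congrArg (fun t : ℤ_[ℓ] => (t : ℚ_[ℓ])) hc
    simp only [PadicInt.coe_mul, PadicInt.coe_sub] at h
    push_cast at h
    exact_mod_cast h
  have key : -(((a : ℤ)) • ((ℓ:ℚ_[ℓ])^e)⁻¹) + x = (c : ℚ_[ℓ]) := by
    rw [zsmul_eq_mul]
    have : ((a:ℤ):ℚ_[ℓ]) = (a:ℚ_[ℓ]) := by push_cast; ring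
    rw [this, neg_add_eq_iff_eq_add]
    field_simp
    linear_combination -hcQ
  rw [QuotientAddGroup.eq, key]
  show _ ∈ PadicInt.subring ℓ
  rw [PadicInt.mem_subring_iff]
  exact c.2

end

section gen
variable {G' : Type*} [AddCommGroup G']

lemma pow_smul_eq_zero_of_le {ℓ j k : ℕ} (h : j ≤ k) {x : G'} (hx : ℓ^j • x = 0) :
    ℓ^k • x = 0 := by
  rw [← Nat.add_sub_cancel' h, pow_add, mul_nsmul, hx, smul_zero]

lemma card_quot_smul_range_eq_card_ker [Finite G'] (N : ℕ) :
    Nat.card (G' ⧸ (DistribMulAction.toAddMonoidHom G' N).range)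
      = Nat.card (DistribMulAction.toAddMonoidHom G' N).ker := by
  set f := DistribMulAction.toAddMonoidHom G' N
  have h1 := AddSubgroup.card_eq_card_quotient_mul_card_addSubgroup f.range
  have h2 := AddSubgroup.card_eq_card_quotient_mul_card_addSubgroup f.ker
  have h3 : Nat.card (G' ⧸ f.ker) = Nat.card f.range :=
    Nat.card_congr (QuotientAddGroup.quotientKerEquivRange f).toEquiv
  have hpos : 0 < Nat.card f.range := Nat.card_pos
  apply Nat.eq_of_mul_eq_mul_right hpos
  rw [← h1]
  rw [h2, h3, mul_comm]

end gen

section tor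
variable (ℓ : ℕ) [Fact ℓ.Prime] (e : ℕ)

lemma torSub_DQ_eq_range : torSub (DQ ℓ) (ℓ^e) = (DQ.hom ℓ e).range := by
  ext d
  constructor
  · intro hd
    obtain ⟨z, hz⟩ := DQ.hom_surj ℓ e (mem_torSub.mp hd)
    exact ⟨z, hz⟩
  · rintro ⟨z, rfl⟩
    exact mem_torSub.mpr (DQ.hom_tor ℓ e z)

lemma card_torSub_DQ_dvd : Nat.card (torSub (DQ ℓ) (ℓ^e)) ∣ ℓ^e := by
  haveI : NeZero (ℓ^e) := ⟨pow_ne_zero _ (Fact.out : ℓ.Prime).ne_zero⟩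
  have h := AddSubgroup.card_dvd_of_surjective (DQ.hom ℓ e).rangeRestrict
    (AddMonoidHom.rangeRestrict_surjective _)
  rw [Nat.card_zmod] at h
  rw [torSub_DQ_eq_range]
  exact h

lemma finite_torSub_DQ : Finite (torSub (DQ ℓ) (ℓ^e)) := by
  haveI : NeZero (ℓ^e) := ⟨pow_ne_zero _ (Fact.out : ℓ.Prime).ne_zero⟩
  rw [torSub_DQ_eq_range]
  exact Finite.of_surjective _ (AddMonoidHom.rangeRestrict_surjective (DQ.hom ℓ e))

end tor

section prodtor
variable {X Y : Type*} [AddCommGroup X] [AddCommGroup Y] {n N : ℕ}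

def torEquiv : {g : (Fin n → X) × Y // N • g = 0} ≃
    (Fin n → {d : X // N • d = 0}) × {y : Y // N • y = 0} where
  toFun g := (fun i => ⟨g.1.1 i, by
      have := congrArg Prod.fst g.2
      exact congrFun this i⟩,
    ⟨g.1.2, congrArg Prod.snd g.2⟩)
  invFun p := ⟨(fun i => (p.1 i).1, p.2.1), by
    ext
    · exact (p.1 _).2
    · exact p.2.2⟩
  left_inv g := by ext <;> rfl
  right_inv p := by ext <;> rfl

end prodtor



/-- Lemme 1.2 : Let `ℓ` be a prime, `n m : ℕ`, `F` a finite abelian `ℓ`-group.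
If `A` is a finite subquotient of `(ℚ_ℓ/ℤ_ℓ)^n ⊕ F` annihilated by `ℓ^m`,
then the order of `A` divides `ℓ^{m·n} · |F[ℓ^m]|`. -/
theorem stmt_0 (ℓ : ℕ) [Fact ℓ.Prime] (n m : ℕ)
    (F : Type) [AddCommGroup F] [Finite F]
    (hF : ∀ x : F, ∃ k : ℕ, ℓ ^ k • x = 0)
    (A : Type) [AddCommGroup A] [Finite A]
    (S : AddSubgroup ((Fin n → ℚ_[ℓ] ⧸ (PadicInt.subring ℓ).toAddSubgroup) × F))
    (φ : S →+ A) (hφ : Function.Surjective φ)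
    (hA : ∀ a : A, ℓ ^ m • a = 0) :
    Nat.card A ∣ ℓ ^ (m * n) * Nat.card {x : F // ℓ ^ m • x = 0} := by
  classical
  haveI : Fintype A := Fintype.ofFinite A
  set G := (Fin n → DQ ℓ) × F with hG
  -- every element of G is killed by a power of ℓ
  have hGtor : ∀ g : G, ∃ k, ℓ ^ k • g = 0 := by
    rintro ⟨v, x⟩
    choose K hK using fun i => DQ.torsion ℓ (v i)
    obtain ⟨kF, hkF⟩ := hF x
    refine ⟨(Finset.univ.sup K) ⊔ kF, ?_⟩
    have hv : ℓ ^ ((Finset.univ.sup K) ⊔ kF) • v = 0 := by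
      funext i
      show ℓ ^ _ • v i = 0
      exact pow_smul_eq_zero_of_le
        (le_trans (Finset.le_sup (Finset.mem_univ i)) le_sup_left) (hK i)
    have hx : ℓ ^ ((Finset.univ.sup K) ⊔ kF) • x = 0 :=
      pow_smul_eq_zero_of_le le_sup_right hkF
    show (ℓ ^ _ • v, ℓ ^ _ • x) = (0, 0)
    rw [hv, hx]
  -- torsion in S
  have hStor : ∀ s : S, ∃ k, ℓ ^ k • s = 0 := by
    intro s
    obtain ⟨k, hk⟩ := hGtor s.1
    exact ⟨k, Subtype.ext (by rw [show ((ℓ^k • s : S) : G) = ℓ^k • (s : G) from rfl, hk]; rfl)⟩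
  -- choose preimages of elements of A and a common exponent M
  choose sfun h1 using hφ
  choose kfun h2 using fun a => hStor (sfun a)
  set M := Finset.univ.sup kfun with hM
  set T : AddSubgroup S := torSub S (ℓ^M) with hT
  -- φ restricted to T is surjective
  have hsurjT : Function.Surjective (φ.comp T.subtype) := by
    intro a
    refine ⟨⟨sfun a, ?_⟩, h1 a⟩
    exact mem_torSub.mpr
      (pow_smul_eq_zero_of_le (Finset.le_sup (Finset.mem_univ a)) (h2 a))
  -- T is finite
  haveI : Finite (torSub (DQ ℓ) (ℓ^M)) := finite_torSub_DQ ℓ M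
  haveI hfinT : Finite T := by
    have hinj : Function.Injective
        (fun t : T => (⟨(t.1 : G), by
          have ht := mem_torSub.mp t.2
          have : ((ℓ ^ M • t.1 : S) : G) = ℓ ^ M • (t.1 : G) := rfl
          rw [← this, ht]; rfl⟩ : {g : G // ℓ^M • g = 0})) := by
      intro t t' h
      have h' : ((t.1 : ↥S) : G) = ((t'.1 : ↥S) : G) := congrArg (Subtype.val : {g : G // ℓ^M • g = 0} → G) h
      exact Subtype.ext (Subtype.ext h')
    have : Finite {g : G // ℓ^M • g = 0} := by
      have e := torEquiv (X := DQ ℓ) (Y := F) (n := n) (N := ℓ^M)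
      have : Finite {d : DQ ℓ // ℓ^M • d = 0} :=
        Finite.of_equiv _ (Equiv.subtypeEquivRight (fun _ => Iff.rfl) :
          (torSub (DQ ℓ) (ℓ^M) : Set (DQ ℓ)) ≃ _)
      exact Finite.of_equiv _ e.symm
    exact Finite.of_injective _ hinj
  -- the multiplication-by-ℓ^m map on T
  set f : T →+ T := DistribMulAction.toAddMonoidHom T (ℓ^m) with hf
  -- A is a quotient of T ⧸ f.range
  have hψ : ∀ t ∈ f.range, (φ.comp T.subtype) t = 0 := by
    rintro t ⟨u, rfl⟩
    show φ (T.subtype (ℓ^m • u)) = 0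
    rw [map_nsmul, map_nsmul, hA]
  set ψ : (T ⧸ f.range) →+ A := QuotientAddGroup.lift f.range (φ.comp T.subtype) hψ with hψ'
  have hψsurj : Function.Surjective ψ := by
    intro a
    obtain ⟨t, ht⟩ := hsurjT a
    exact ⟨QuotientAddGroup.mk t, ht⟩
  have step1 : Nat.card A ∣ Nat.card (T ⧸ f.range) :=
    AddSubgroup.card_dvd_of_surjective ψ hψsurj
  -- |T ⧸ f.range| = |f.ker|
  have step2 : Nat.card (T ⧸ f.range) = Nat.card f.ker :=
    card_quot_smul_range_eq_card_ker (ℓ^m)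
  -- f.ker embeds into the ℓ^m-torsion of G
  have step3 : Nat.card f.ker ∣ Nat.card (torSub G (ℓ^m)) := by
    set c : f.ker →+ G := (S.subtype.comp T.subtype).comp f.ker.subtype with hc
    have hcinj : Function.Injective c := by
      intro t t' h
      exact Subtype.ext (Subtype.ext (Subtype.ext h))
    have hle : c.range ≤ torSub G (ℓ^m) := by
      rintro g ⟨t, rfl⟩
      have ht : ℓ^m • t.1 = 0 := t.2
      refine mem_torSub.mpr ?_
      show ℓ^m • ((t.1 : S) : G) = 0
      have e1 : ((ℓ ^ m • t.1 : T) : S) = ℓ ^ m • (t.1 : S) := rfl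
      have e2 : ((ℓ ^ m • (t.1 : S) : S) : G) = ℓ ^ m • ((t.1 : S) : G) := rfl
      rw [← e2, ← e1, ht]
      rfl
    calc Nat.card f.ker = Nat.card c.range :=
          Nat.card_congr (AddMonoidHom.ofInjective hcinj).toEquiv
      _ ∣ Nat.card (torSub G (ℓ^m)) := AddSubgroup.card_dvd_of_le hle
  -- compute the card of the ℓ^m-torsion of G
  have step4 : Nat.card (torSub G (ℓ^m)) ∣ ℓ^(m*n) * Nat.card {x : F // ℓ ^ m • x = 0} := by
    have e0 : Nat.card (torSub G (ℓ^m)) = Nat.card {g : G // ℓ^m • g = 0} :=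
      Nat.card_congr (Equiv.subtypeEquivRight (fun _ => Iff.rfl))
    have e1 : Nat.card {g : G // ℓ^m • g = 0} =
        Nat.card (Fin n → {d : DQ ℓ // ℓ^m • d = 0}) * Nat.card {x : F // ℓ ^ m • x = 0} := by
      rw [Nat.card_congr (torEquiv (X := DQ ℓ) (Y := F) (n := n) (N := ℓ^m)), Nat.card_prod]
    have e2 : Nat.card (Fin n → {d : DQ ℓ // ℓ^m • d = 0}) =
        Nat.card {d : DQ ℓ // ℓ^m • d = 0} ^ n := by
      rw [Nat.card_fun, Nat.card_eq_fintype_card (α := Fin n), Fintype.card_fin]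
    have e3 : Nat.card {d : DQ ℓ // ℓ^m • d = 0} ∣ ℓ^m := by
      have h := card_torSub_DQ_dvd ℓ m
      have e : Nat.card (torSub (DQ ℓ) (ℓ^m)) = Nat.card {d : DQ ℓ // ℓ^m • d = 0} :=
        Nat.card_congr (Equiv.subtypeEquivRight (fun d => Iff.rfl))
      rwa [e] at h
    rw [e0, e1, e2]
    apply mul_dvd_mul _ dvd_rfl
    calc Nat.card {d : DQ ℓ // ℓ^m • d = 0} ^ n ∣ (ℓ^m)^n := pow_dvd_pow_of_dvd e3 n
      _ = ℓ^(m*n) := by rw [← pow_mul]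
  exact (step1.trans (step2 ▸ step3)).trans step4
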